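/- For a signed measure H = Q₁ − Q₂ (difference of two probability measures on ℝ^k) and any f, g with ‖f−g‖_{β,ω-span} < ∞, ∫ (f(z)−g(z)) H(dz) ≤ ‖f−g‖_{β,ω-span} · ∫ (1+βω(z)) |H|(dz). (Key step: since H has total mass zero, one may add the centering constant c₀ with sup_z (f−g+c₀)(z)/(1+βω(z)) = −inf_z (f−g+c₀)(z)/(1+βω(z)) = ‖f−g‖_{β,ω-span}.) -/

import Mathlib

open MeasureTheory Set

/-- β-weighted ω-span seminorm. -/
noncomputable def wspanb {k : ℕ} (β : ℝ) (ω f : (Fin k → ℝ) → ℝ) : ℝ :=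
  ⨆ p : (Fin k → ℝ) × (Fin k → ℝ),
    (f p.1 - f p.2) / (2 + β * ω p.1 + β * ω p.2)

theorem stmt16 (k : ℕ) (ω : (Fin k → ℝ) → ℝ) (hωc : Continuous ω)
    (hω0 : ∀ x, 0 ≤ ω x) (β : ℝ) (hβ : 0 < β)
    (Q₁ Q₂ : Measure (Fin k → ℝ))
    [IsProbabilityMeasure Q₁] [IsProbabilityMeasure Q₂]
    (f g : (Fin k → ℝ) → ℝ)
    (hspan : BddAbove (Set.range fun p : (Fin k → ℝ) × (Fin k → ℝ) =>
      ((f p.1 - g p.1) - (f p.2 - g p.2)) / (2 + β * ω p.1 + β * ω p.2)))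
    (hI₁ : Integrable (fun z => f z - g z) Q₁)
    (hI₂ : Integrable (fun z => f z - g z) Q₂)
    (hIvar : Integrable (fun z => 1 + β * ω z)
      ((Q₁.toSignedMeasure - Q₂.toSignedMeasure).totalVariation)) :
    (∫ z, (f z - g z) ∂Q₁) - (∫ z, (f z - g z) ∂Q₂) ≤
      wspanb β ω (fun z => f z - g z) *
        ∫ z, (1 + β * ω z)
          ∂((Q₁.toSignedMeasure - Q₂.toSignedMeasure).totalVariation) := by
  classical
  set φ : (Fin k → ℝ) → ℝ := fun z => f z - g z with hφdef
  set s := Q₁.toSignedMeasure - Q₂.toSignedMeasure with hs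
  set Jp := s.toJordanDecomposition.posPart with hJp
  set Jn := s.toJordanDecomposition.negPart with hJn
  have hTV : s.totalVariation = Jp + Jn := rfl
  -- the signed measure evaluated two ways
  have hsap : ∀ i : Set (Fin k → ℝ), MeasurableSet i →
      (Q₁ i).toReal - (Q₂ i).toReal = (Jp i).toReal - (Jn i).toReal := by
    intro i hi
    have h1 : s i = (Q₁ i).toReal - (Q₂ i).toReal :=
      Measure.toSignedMeasure_sub_apply hi
    have h2 : s.toJordanDecomposition.toSignedMeasure = s :=
      s.toSignedMeasure_toJordanDecomposition
    have h3 : s i = (Jp i).toReal - (Jn i).toReal := by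
      conv_lhs => rw [← h2]
      exact Measure.toSignedMeasure_sub_apply hi
    linarith
  -- measure identity Q₁ + Jn = Q₂ + Jp
  have hmeq : Q₁ + Jn = Q₂ + Jp := by
    ext i hi
    have h := hsap i hi
    have e1 : Q₁ i ≠ ⊤ := measure_ne_top _ _
    have e2 : Q₂ i ≠ ⊤ := measure_ne_top _ _
    have e3 : Jp i ≠ ⊤ := measure_ne_top _ _
    have e4 : Jn i ≠ ⊤ := measure_ne_top _ _
    simp only [Measure.add_apply]
    rw [← ENNReal.toReal_eq_toReal_iff' (by simp [e1, e4]) (by simp [e2, e3]),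
      ENNReal.toReal_add e1 e4, ENNReal.toReal_add e2 e3]
    linarith
  -- Jp ≤ Q₁ and Jn ≤ Q₂ via mutual singularity
  obtain ⟨t, htm, htp, htn⟩ := s.toJordanDecomposition.mutuallySingular
  have hJpQ : Jp ≤ Q₁ := by
    intro i
    calc Jp i = Jp (i ∩ tᶜ) + Jp (i \ tᶜ) := (measure_inter_add_diff i htm.compl).symm
      _ ≤ Jp (i ∩ tᶜ) + 0 := by
          gcongr
          exact le_of_le_of_eq (measure_mono (by intro x hx; simpa using hx.2)) htp
      _ = Jp (i ∩ tᶜ) := by ring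
      _ ≤ (Q₂ + Jp) (i ∩ tᶜ) := by simp [Measure.add_apply]
      _ = (Q₁ + Jn) (i ∩ tᶜ) := by rw [hmeq]
      _ = Q₁ (i ∩ tᶜ) + Jn (i ∩ tᶜ) := rfl
      _ ≤ Q₁ i + 0 := by
          gcongr
          · exact Set.inter_subset_left
          · exact le_of_le_of_eq (measure_mono (Set.inter_subset_right)) htn
      _ = Q₁ i := by ring
  have hJnQ : Jn ≤ Q₂ := by
    intro i
    calc Jn i = Jn (i ∩ t) + Jn (i \ t) := (measure_inter_add_diff i htm).symm
      _ ≤ Jn (i ∩ t) + 0 := by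
          gcongr
          exact le_of_le_of_eq (measure_mono (by intro x hx; simpa using hx.2)) htn
      _ = Jn (i ∩ t) := by ring
      _ ≤ (Q₁ + Jn) (i ∩ t) := by simp [Measure.add_apply]
      _ = (Q₂ + Jp) (i ∩ t) := by rw [← hmeq]
      _ = Q₂ (i ∩ t) + Jp (i ∩ t) := rfl
      _ ≤ Q₂ i + 0 := by
          gcongr
          · exact Set.inter_subset_left
          · exact le_of_le_of_eq (measure_mono (Set.inter_subset_right)) htp
      _ = Q₂ i := by ring
  -- integrabilities
  have hIp : Integrable φ Jp := hI₁.mono_measure hJpQ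
  have hIn : Integrable φ Jn := hI₂.mono_measure hJnQ
  rw [hTV] at hIvar
  have hIvp : Integrable (fun z => 1 + β * ω z) Jp :=
    hIvar.mono_measure (Measure.le_add_right le_rfl)
  have hIvn : Integrable (fun z => 1 + β * ω z) Jn :=
    hIvar.mono_measure (Measure.le_add_left le_rfl)
  -- total masses
  set m := (Jp Set.univ).toReal with hm
  have hmn : (Jn Set.univ).toReal = m := by
    have := hsap Set.univ MeasurableSet.univ
    simp at this
    linarith
  have hm0 : 0 ≤ m := ENNReal.toReal_nonneg
  -- rewrite LHS via Jordan parts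
  have hint : (∫ z, φ z ∂Q₁) - (∫ z, φ z ∂Q₂) = (∫ z, φ z ∂Jp) - ∫ z, φ z ∂Jn := by
    have h1 : (∫ z, φ z ∂Q₁) + (∫ z, φ z ∂Jn) = (∫ z, φ z ∂Q₂) + ∫ z, φ z ∂Jp := by
      rw [← integral_add_measure hI₁ hIn, ← integral_add_measure hI₂ hIp, hmeq]
    linarith
  -- span seminorm facts
  set M := wspanb β ω φ with hM
  have hkey : ∀ x y, φ x - φ y ≤ M * ((1 + β * ω x) + (1 + β * ω y)) := by
    intro x y
    have hD : (0:ℝ) < 2 + β * ω x + β * ω y := by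
      have h1 := mul_nonneg hβ.le (hω0 x)
      have h2 := mul_nonneg hβ.le (hω0 y)
      linarith
    have hle : (φ x - φ y) / (2 + β * ω x + β * ω y) ≤ M :=
      le_ciSup hspan (x, y)
    rw [div_le_iff₀ hD] at hle
    calc φ x - φ y ≤ M * (2 + β * ω x + β * ω y) := hle
      _ = M * ((1 + β * ω x) + (1 + β * ω y)) := by ring
  have hM0 : 0 ≤ M := by
    have h0 := le_ciSup hspan ((fun _ => 0, fun _ => 0) :
      (Fin k → ℝ) × (Fin k → ℝ))
    simp at h0; exact h0
  set Ip := ∫ z, (1 + β * ω z) ∂Jp with hIpdef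
  set In := ∫ z, (1 + β * ω z) ∂Jn with hIndef
  have hIvar_split : ∫ z, (1 + β * ω z) ∂(s.totalVariation) = Ip + In := by
    rw [hTV, integral_add_measure hIvp hIvn]
  -- Step 1 : for every y
  have step1 : ∀ y, (∫ z, φ z ∂Jp) - m * φ y ≤ M * Ip + m * (M * (1 + β * ω y)) := by
    intro y
    have hmono : ∫ x, (φ x - φ y) ∂Jp ≤
        ∫ x, (M * (1 + β * ω x) + M * (1 + β * ω y)) ∂Jp := by
      refine integral_mono (hIp.sub (integrable_const _))
        ((hIvp.const_mul M).add (integrable_const _)) ?_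
      intro x
      have := hkey x y
      show φ x - φ y ≤ M * (1 + β * ω x) + M * (1 + β * ω y)
      linarith
    rw [integral_sub hIp (integrable_const _), integral_const] at hmono
    rw [integral_add (hIvp.const_mul M) (integrable_const _), integral_const,
      integral_const_mul] at hmono
    change (∫ z, φ z ∂Jp) - m * φ y ≤ M * Ip + m * (M * (1 + β * ω y)) at hmono
    exact hmono
  -- Step 2 : integrate over y w.r.t. Jn
  have step2 : m * ((∫ z, φ z ∂Jp) - M * Ip) ≤ m * (∫ z, φ z ∂Jn) + m * (M * In) := by
    have hmono : ∫ y, ((∫ z, φ z ∂Jp) - M * Ip) ∂Jn ≤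
        ∫ y, (m * φ y + m * (M * (1 + β * ω y))) ∂Jn := by
      refine integral_mono (integrable_const _)
        ((hIn.const_mul m).add ((hIvn.const_mul M).const_mul m)) ?_
      intro y
      have := step1 y
      show (∫ z, φ z ∂Jp) - M * Ip ≤ m * φ y + m * (M * (1 + β * ω y))
      linarith
    rw [integral_const, integral_add (hIn.const_mul m)
      ((hIvn.const_mul M).const_mul m), integral_const_mul, integral_const_mul,
      integral_const_mul] at hmono
    rw [show Jn.real Set.univ = m from hmn] at hmono
    exact hmono
  -- conclude
  rw [hint, hIvar_split]
  rcases eq_or_lt_of_le hm0 with hmz | hmpos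
  · -- m = 0 : Jp = Jn = 0
    have hJp0 : Jp = 0 := by
      have h0 : Jp Set.univ = 0 :=
        ((ENNReal.toReal_eq_zero_iff _).mp (by rw [← hm]; exact hmz.symm)).resolve_right
          (measure_ne_top _ _)
      exact Measure.measure_univ_eq_zero.mp h0
    have hJn0 : Jn = 0 := by
      have h0 : Jn Set.univ = 0 :=
        ((ENNReal.toReal_eq_zero_iff _).mp (by rw [hmn]; exact hmz.symm)).resolve_right
          (measure_ne_top _ _)
      exact Measure.measure_univ_eq_zero.mp h0
    have e1 : ∫ z, φ z ∂Jp = 0 := by rw [hJp0]; simp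
    have e2 : ∫ z, φ z ∂Jn = 0 := by rw [hJn0]; simp
    have e3 : Ip = 0 := by rw [hIpdef, hJp0]; simp
    have e4 : In = 0 := by rw [hIndef, hJn0]; simp
    rw [e1, e2, e3, e4]
    simp
  · -- m > 0 : divide step2 by m
    have h := step2
    nlinarith [h, hmpos]
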